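/- Let Ψ : [0,∞) → [0,∞) be a C² convex function with Ψ(0) = 0 whose derivative Ψ' is concave. Then for all z₁, z₂ > 0, 0 ≤ Ψ(z₁+z₂) − Ψ(z₁) − Ψ(z₂) ≤ 2·(z₁·Ψ(z₂) + z₂·Ψ(z₁))/(z₁+z₂). -/

import Mathlib

open Set Filter

private lemma psi_diffAt (Ψ : ℝ → ℝ) (hC2 : ContDiffOn ℝ 2 Ψ (Ici 0))
    {x : ℝ} (hx : 0 < x) : DifferentiableAt ℝ Ψ x := by
  have hmem : Ici (0:ℝ) ∈ nhds x :=
    mem_nhds_iff.2 ⟨Ioi 0, Ioi_subset_Ici le_rfl, isOpen_Ioi, hx⟩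
  exact (hC2.contDiffAt hmem).differentiableAt two_ne_zero

private lemma psi_f0 (Ψ : ℝ → ℝ) (hnonneg : ∀ z ∈ Ici (0:ℝ), 0 ≤ Ψ z)
    (h0 : Ψ 0 = 0) : 0 ≤ deriv Ψ 0 := by
  by_cases hd : DifferentiableAt ℝ Ψ 0
  · have ht := hasDerivAt_iff_tendsto_slope.1 hd.hasDerivAt
    have ht' : Tendsto (slope Ψ 0) (nhdsWithin 0 (Ioi 0)) (nhds (deriv Ψ 0)) :=
      ht.mono_left (nhdsWithin_mono _ (fun x hx => ne_of_gt hx))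
    refine ge_of_tendsto ht' ?_
    filter_upwards [self_mem_nhdsWithin] with x hx
    rw [slope_def_field]
    apply div_nonneg
    · have := hnonneg x (mem_Ici.2 (le_of_lt (mem_Ioi.1 hx)))
      simp [h0, this]
    · simp [le_of_lt (mem_Ioi.1 hx)]
  · simp [deriv_zero_of_not_differentiableAt hd]

private lemma psi_concadd (Ψ : ℝ → ℝ) (hconc : ConcaveOn ℝ (Ici 0) (deriv Ψ))
    {a t : ℝ} (ha : 0 < a) (ht : 0 < t) :
    deriv Ψ (a + t) + deriv Ψ 0 ≤ deriv Ψ a + deriv Ψ t := by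
  set f := deriv Ψ with hf
  set s := a + t with hsdef
  have hs : 0 < s := by positivity
  have hw : t / s + a / s = 1 := by field_simp; ring
  have hw' : a / s + t / s = 1 := by field_simp; linarith
  have h1 := hconc.2 (mem_Ici.2 le_rfl) (mem_Ici.2 hs.le)
    (div_nonneg ht.le hs.le) (div_nonneg ha.le hs.le) hw
  have h2 := hconc.2 (mem_Ici.2 le_rfl) (mem_Ici.2 hs.le)
    (div_nonneg ha.le hs.le) (div_nonneg ht.le hs.le) hw'
  simp only [smul_eq_mul, mul_zero, zero_add] at h1 h2
  rw [div_mul_cancel₀ a hs.ne'] at h1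
  rw [div_mul_cancel₀ t hs.ne'] at h2
  have hsum : (t / s * f 0 + a / s * f s) + (a / s * f 0 + t / s * f s)
      = f 0 + f s := by linear_combination (f 0 + f s) * hw
  linarith [h1, h2]

private lemma psi_key (Ψ : ℝ → ℝ) (hC2 : ContDiffOn ℝ 2 Ψ (Ici 0))
    (h0 : Ψ 0 = 0) (hconc : ConcaveOn ℝ (Ici 0) (deriv Ψ))
    (hf0 : 0 ≤ deriv Ψ 0) {a b : ℝ} (ha : 0 < a) (hb : 0 < b) :
    Ψ (a + b) - Ψ a - Ψ b ≤ b * deriv Ψ a := by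
  set f := deriv Ψ with hf
  have hcont : ContinuousOn Ψ (Ici 0) := hC2.continuousOn
  set g : ℝ → ℝ := fun t => Ψ (a + t) - Ψ t - t * f a with hg
  have hgd : ∀ t ∈ Ioo (0:ℝ) b, HasDerivAt g (f (a + t) - f t - f a) t := by
    intro t htm
    have h1 : HasDerivAt (fun t => Ψ (a + t)) (f (a + t)) t := by
      have := ((psi_diffAt Ψ hC2 (add_pos ha htm.1)).hasDerivAt).comp t
        ((hasDerivAt_id t).const_add a)
      rw [mul_one] at this
      exact this
    have h2 : HasDerivAt Ψ (f t) t := (psi_diffAt Ψ hC2 htm.1).hasDerivAt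
    have h3 : HasDerivAt (fun t => t * f a) (f a) t := by
      simpa using (hasDerivAt_id t).mul_const (f a)
    exact (h1.sub h2).sub h3
  have contg : ContinuousOn g (Icc 0 b) := by
    have c1 : ContinuousOn (fun t => Ψ (a + t)) (Icc 0 b) := by
      refine hcont.comp ((continuous_const.add continuous_id).continuousOn) ?_
      intro t htm
      have := htm.1
      simp only [mem_Ici]
      positivity
    have c2 : ContinuousOn Ψ (Icc 0 b) := hcont.mono (Icc_subset_Ici_self)
    exact (c1.sub c2).sub ((continuous_id.mul continuous_const).continuousOn)
  have diffg : DifferentiableOn ℝ g (interior (Icc 0 b)) := by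
    rw [interior_Icc]
    exact fun t htm => ((hgd t htm).differentiableAt).differentiableWithinAt
  have nonpos : ∀ t ∈ interior (Icc 0 b), deriv g t ≤ 0 := by
    intro t htm
    rw [interior_Icc] at htm
    rw [(hgd t htm).deriv]
    have := psi_concadd Ψ hconc ha htm.1
    linarith
  have hanti : AntitoneOn g (Icc 0 b) :=
    antitoneOn_of_deriv_nonpos (convex_Icc 0 b) contg diffg nonpos
  have hfin : g b ≤ g 0 :=
    hanti (Set.mem_Icc.2 ⟨le_rfl, hb.le⟩) (Set.mem_Icc.2 ⟨hb.le, le_rfl⟩) hb.le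
  simp only [hg, add_zero, h0, zero_mul, sub_zero] at hfin
  linarith

private lemma psi_xfx (Ψ : ℝ → ℝ) (hC2 : ContDiffOn ℝ 2 Ψ (Ici 0))
    (h0 : Ψ 0 = 0) (hconc : ConcaveOn ℝ (Ici 0) (deriv Ψ))
    (hf0 : 0 ≤ deriv Ψ 0) {x : ℝ} (hx : 0 < x) :
    x * deriv Ψ x ≤ 2 * Ψ x := by
  set f := deriv Ψ with hf
  set k : ℝ := f x / (2 * x) with hk
  set h : ℝ → ℝ := fun t => Ψ t - k * t ^ 2 with hh
  have hhd : ∀ t ∈ Ioo (0:ℝ) x, HasDerivAt h (f t - k * (2 * t)) t := by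
    intro t htm
    have h1 : HasDerivAt Ψ (f t) t := (psi_diffAt Ψ hC2 htm.1).hasDerivAt
    have h2 : HasDerivAt (fun t : ℝ => k * t ^ 2) (k * (2 * t)) t := by
      simpa using (hasDerivAt_pow 2 t).const_mul k
    exact h1.sub h2
  have conth : ContinuousOn h (Icc 0 x) :=
    (hC2.continuousOn.mono Icc_subset_Ici_self).sub
      ((continuous_const.mul (continuous_pow 2)).continuousOn)
  have diffh : DifferentiableOn ℝ h (interior (Icc 0 x)) := by
    rw [interior_Icc]
    exact fun t htm => ((hhd t htm).differentiableAt).differentiableWithinAt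
  have nonneg : ∀ t ∈ interior (Icc 0 x), 0 ≤ deriv h t := by
    intro t htm
    rw [interior_Icc] at htm
    rw [(hhd t htm).deriv]
    have hw : (1 - t / x) + t / x = 1 := by ring
    have hw1 : 0 ≤ 1 - t / x := by
      have : t / x ≤ 1 := (div_le_one hx).2 htm.2.le
      linarith
    have h1 := hconc.2 (mem_Ici.2 le_rfl) (mem_Ici.2 hx.le) hw1
      (div_nonneg htm.1.le hx.le) hw
    simp only [smul_eq_mul, mul_zero, zero_add] at h1
    rw [div_mul_cancel₀ t hx.ne'] at h1
    have he : k * (2 * t) = t / x * f x := by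
      rw [hk]; field_simp
    nlinarith [mul_nonneg hw1 hf0]
  have hmono : MonotoneOn h (Icc 0 x) :=
    monotoneOn_of_deriv_nonneg (convex_Icc 0 x) conth diffh nonneg
  have hfin : h 0 ≤ h x :=
    hmono (Set.mem_Icc.2 ⟨le_rfl, hx.le⟩) (Set.mem_Icc.2 ⟨hx.le, le_rfl⟩) hx.le
  simp only [hh, h0] at hfin
  have he : k * x ^ 2 = x * f x / 2 := by
    rw [hk]; field_simp
  nlinarith

theorem psi_superadditivity_bound
    (Ψ : ℝ → ℝ)
    (hC2 : ContDiffOn ℝ 2 Ψ (Ici 0))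
    (hnonneg : ∀ z ∈ Ici (0:ℝ), 0 ≤ Ψ z)
    (hconv : ConvexOn ℝ (Ici 0) Ψ)
    (h0 : Ψ 0 = 0)
    (hconc : ConcaveOn ℝ (Ici 0) (deriv Ψ)) :
    ∀ z₁ > (0:ℝ), ∀ z₂ > (0:ℝ),
      0 ≤ Ψ (z₁ + z₂) - Ψ z₁ - Ψ z₂ ∧
      Ψ (z₁ + z₂) - Ψ z₁ - Ψ z₂ ≤ 2 * (z₁ * Ψ z₂ + z₂ * Ψ z₁) / (z₁ + z₂) := by
  intro z₁ hz₁ z₂ hz₂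
  have hs : 0 < z₁ + z₂ := by positivity
  have hf0 : 0 ≤ deriv Ψ 0 := psi_f0 Ψ hnonneg h0
  constructor
  · -- superadditivity from convexity
    have hw1 : z₂ / (z₁ + z₂) + z₁ / (z₁ + z₂) = 1 := by field_simp; ring
    have hw2 : z₁ / (z₁ + z₂) + z₂ / (z₁ + z₂) = 1 := by field_simp
    have h1 := hconv.2 (mem_Ici.2 le_rfl) (mem_Ici.2 hs.le)
      (div_nonneg hz₂.le hs.le) (div_nonneg hz₁.le hs.le) hw1
    have h2 := hconv.2 (mem_Ici.2 le_rfl) (mem_Ici.2 hs.le)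
      (div_nonneg hz₁.le hs.le) (div_nonneg hz₂.le hs.le) hw2
    simp only [smul_eq_mul, mul_zero, zero_add, h0] at h1 h2
    rw [div_mul_cancel₀ z₁ hs.ne'] at h1
    rw [div_mul_cancel₀ z₂ hs.ne'] at h2
    have hsum : z₁ / (z₁ + z₂) * Ψ (z₁ + z₂) + z₂ / (z₁ + z₂) * Ψ (z₁ + z₂)
        = Ψ (z₁ + z₂) := by linear_combination Ψ (z₁ + z₂) * hw2
    linarith
  · have hk1 : Ψ (z₁ + z₂) - Ψ z₁ - Ψ z₂ ≤ z₂ * deriv Ψ z₁ :=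
      psi_key Ψ hC2 h0 hconc hf0 hz₁ hz₂
    have hk2 : Ψ (z₁ + z₂) - Ψ z₁ - Ψ z₂ ≤ z₁ * deriv Ψ z₂ := by
      have := psi_key Ψ hC2 h0 hconc hf0 hz₂ hz₁
      rw [add_comm] at this
      linarith
    have hx1 : z₁ * deriv Ψ z₁ ≤ 2 * Ψ z₁ := psi_xfx Ψ hC2 h0 hconc hf0 hz₁
    have hx2 : z₂ * deriv Ψ z₂ ≤ 2 * Ψ z₂ := psi_xfx Ψ hC2 h0 hconc hf0 hz₂
    rw [le_div_iff₀ hs]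
    nlinarith [mul_le_mul_of_nonneg_left hk1 hz₁.le,
      mul_le_mul_of_nonneg_left hk2 hz₂.le,
      mul_le_mul_of_nonneg_left hx1 hz₂.le,
      mul_le_mul_of_nonneg_left hx2 hz₁.le]
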